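/- Let A = Fin 3 with elements 0, 1, 2, and let F be the radius-1 one-sided CA over A with F(c)(i) = ρ_{c(i+1)}(c(i)), where ρ₀ = ρ₂ swaps 1 and 2 (fixing 0) and ρ₁ is the 3-cycle 0↦1, 1↦2, 2↦0. Then the topological entropy of F equals 1/2 in base-2 logarithm, i.e., h((ℕ → A), F) = (log 2)/2 when entropy is defined with the natural logarithm. -/

import Mathlib

/-- The one-sided shift map `σ(c)(i) = c(i+1)`. -/
def shift {A : Type*} (c : ℕ → A) : ℕ → A := fun i => c (i + 1)

/-- Discrete uniformity on the (finite) alphabet `Fin n`. -/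
instance (n : ℕ) : UniformSpace (Fin n) := ⊥

/-- The permutations `ρ₀ = ρ₂ = (0)(12)` and `ρ₁ = (012)` (i.e. `0↦1, 1↦2, 2↦0`),
as a family indexed by the right neighbor: `rho b x = ρ_b(x)`. -/
def rho : Fin 3 → Fin 3 → Fin 3 := ![![0, 2, 1], ![1, 2, 0], ![0, 2, 1]]

/-- The radius-1 one-sided CA `F(c)(i) = ρ_{c(i+1)}(c(i))` of the example. -/
def Fex : (ℕ → Fin 3) → ℕ → Fin 3 := fun c i => rho (c (i + 1)) (c i)



lemma fex_iter (c : ℕ → Fin 3) (k i : ℕ) :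
    Fex^[k+1] c i = rho (Fex^[k] c (i+1)) (Fex^[k] c i) := by
  rw [Function.iterate_succ_apply']; rfl

lemma rho_one (b : Fin 3) : rho b 1 = 2 := by fin_cases b <;> decide
lemma rho_eq_two {b y : Fin 3} (h : rho b y = 2) : y = 1 := by revert h; fin_cases b <;> fin_cases y <;> decide
lemma rho_two_eq_zero {b : Fin 3} (h : rho b 2 = 0) : b = 1 := by revert h; fin_cases b <;> decide
lemma rho_zero_eq_one {b : Fin 3} (h : rho b 0 = 1) : b = 1 := by revert h; fin_cases b <;> decide
lemma rho_eq_one {b y : Fin 3} (h : rho b y = 1) : y = 0 ∨ y = 2 := by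
  revert h; fin_cases b <;> fin_cases y <;> decide
lemma rho_two_cases (b : Fin 3) : rho b 2 = 0 ∨ rho b 2 = 1 := by fin_cases b <;> decide

/-- successor of a `1` is `2`. -/
lemma succ_of_one {c : ℕ → Fin 3} {k i : ℕ} (h : Fex^[k] c i = 1) : Fex^[k+1] c i = 2 := by
  rw [fex_iter, h, rho_one]

/-- predecessor of a `2` is `1`. -/
lemma pred_of_two {c : ℕ → Fin 3} {k i : ℕ} (h : Fex^[k+1] c i = 2) : Fex^[k] c i = 1 := by
  rw [fex_iter] at h; exact rho_eq_two h

lemma parity_S : ∀ d : ℕ, ∀ k i : ℕ, ∀ c : ℕ → Fin 3,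
    (Fex^[k] c i = 1 → Fex^[k+2*d] c i ≠ 2) ∧ (Fex^[k] c i = 2 → Fex^[k+2*d] c i ≠ 1) := by
  intro d
  induction d using Nat.strong_induction_on with
  | _ d IH =>
    match d with
    | 0 =>
      intro k i c
      simp only [Nat.mul_zero, Nat.add_zero]
      exact ⟨fun h h2 => by rw [h] at h2; exact absurd h2 (by decide),
             fun h h2 => by rw [h] at h2; exact absurd h2 (by decide)⟩
    | (e+1) =>
      intro k i c
      have he : e < e + 1 := Nat.lt_succ_self e
      constructor
      · -- part A
        intro h1 h2
        have hb : Fex^[k+1] c i = 2 := succ_of_one h1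
        have hkk : k + 2*(e+1) = ((k+1) + 2*e) + 1 := by omega
        rw [hkk] at h2
        exact (IH e he (k+1) i c).2 hb (pred_of_two h2)
      · -- part B
        intro h2 h1
        rcases rho_two_cases (Fex^[k] c (i+1)) with hz | ho
        · -- a_{k+1} = 0 hence b_k = 1
          have hbk : Fex^[k] c (i+1) = 1 := rho_two_eq_zero hz
          have hb1 : Fex^[k+1] c (i+1) = 2 := succ_of_one hbk
          have hkk : k + 2*(e+1) = (k + (2*e+1)) + 1 := by omega
          rw [hkk, fex_iter] at h1
          rcases rho_eq_one h1 with hy0 | hy2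
          · -- predecessor 0 : neighbor is 1 at time k+2e+1
            have hbn : Fex^[k + (2*e+1)] c (i+1) = 1 := by
              rw [hy0] at h1; exact rho_zero_eq_one h1
            have hsh : k + (2*e+1) = (k+1) + 2*e := by omega
            rw [hsh] at hbn
            exact (IH e he (k+1) (i+1) c).2 hb1 hbn
          · -- predecessor 2 : then value 1 at time k+2e
            have hsh : k + (2*e+1) = (k + 2*e) + 1 := by omega
            rw [hsh] at hy2
            exact (IH e he k i c).2 h2 (pred_of_two hy2)
        · -- a_{k+1} = 1
          have ha1 : Fex^[k+1] c i = 1 := by rw [fex_iter, h2]; exact ho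
          have ha2 : Fex^[k+2] c i = 2 := succ_of_one ha1
          have hkk : k + 2*(e+1) = (k+2) + 2*e := by omega
          rw [hkk] at h1
          exact (IH e he (k+2) i c).2 ha2 h1

def gfun (x z : Fin 3) : Fin 3 := if x = 1 then 2 else if z = 2 then 1 else 0

lemma keyL1 : ∀ a b cc : Fin 3, rho b a = gfun a (rho (rho cc b) (rho b a)) := by decide

lemma fin3_cases {x : Fin 3} (h : x ≠ 0) : x = 1 ∨ x = 2 := by
  fin_cases x
  · exact absurd rfl h
  · exact Or.inl rfl
  · exact Or.inr rfl

/-- odd entries of a column are determined by the adjacent even entries -/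
lemma odd_reconstruct (c : ℕ → Fin 3) (i k : ℕ) :
    Fex^[k+1] c i = gfun (Fex^[k] c i) (Fex^[k+2] c i) := by
  have h2 : Fex^[k+2] c i = rho (Fex^[k+1] c (i+1)) (Fex^[k+1] c i) := fex_iter c (k+1) i
  rw [h2, fex_iter c k i, fex_iter c k (i+1)]
  exact keyL1 _ _ _

/-- all nonzero even-time entries of a column are equal -/
lemma evens_eq (c : ℕ → Fin 3) (i : ℕ) {k l : ℕ} (hkl : k ≤ l)
    (hk : Fex^[2*k] c i ≠ 0) (hl : Fex^[2*l] c i ≠ 0) :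
    Fex^[2*k] c i = Fex^[2*l] c i := by
  have hll : 2*l = 2*k + 2*(l-k) := by omega
  rcases fin3_cases hk with h1 | h1 <;> rcases fin3_cases hl with h2 | h2
  · rw [h1, h2]
  · exfalso; rw [hll] at h2; exact (parity_S (l-k) (2*k) i c).1 h1 h2
  · exfalso; rw [hll] at h2; exact (parity_S (l-k) (2*k) i c).2 h1 h2
  · rw [h1, h2]

/-- a column is determined up to time 2K by the zero-pattern of its even entries
together with one bit saying whether some even entry equals 2. -/
lemma column_ext {c c' : ℕ → Fin 3} {i i' : ℕ} (K : ℕ)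
    (hv : ∀ k ≤ K, (Fex^[2*k] c i = 0 ↔ Fex^[2*k] c' i' = 0))
    (hb : (∃ k ≤ K, Fex^[2*k] c i = 2) ↔ (∃ k ≤ K, Fex^[2*k] c' i' = 2)) :
    ∀ j ≤ 2*K, Fex^[j] c i = Fex^[j] c' i' := by
  -- first, even entries agree
  have heven : ∀ k ≤ K, Fex^[2*k] c i = Fex^[2*k] c' i' := by
    intro k hk
    by_cases h0 : Fex^[2*k] c i = 0
    · rw [h0, ((hv k hk).mp h0).symm]
    · have h0' : Fex^[2*k] c' i' ≠ 0 := fun h => h0 ((hv k hk).mpr h)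
      by_cases h2 : ∃ l ≤ K, Fex^[2*l] c i = 2
      · obtain ⟨l, hl, hl2⟩ := h2
        obtain ⟨l', hl', hl2'⟩ := hb.mp ⟨l, hl, hl2⟩
        have e1 : Fex^[2*k] c i = 2 := by
          rcases le_total k l with h | h
          · rw [evens_eq c i h h0 (by rw [hl2]; decide)]; exact hl2
          · rw [← evens_eq c i h (by rw [hl2]; decide) h0]; exact hl2
        have e2 : Fex^[2*k] c' i' = 2 := by
          rcases le_total k l' with h | h
          · rw [evens_eq c' i' h h0' (by rw [hl2']; decide)]; exact hl2'
          · rw [← evens_eq c' i' h (by rw [hl2']; decide) h0']; exact hl2'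
        rw [e1, e2]
      · have h2' : ¬ ∃ l ≤ K, Fex^[2*l] c' i' = 2 := fun h => h2 (hb.mpr h)
        have e1 : Fex^[2*k] c i = 1 := by
          rcases fin3_cases h0 with h | h
          · exact h
          · exact absurd ⟨k, hk, h⟩ h2
        have e2 : Fex^[2*k] c' i' = 1 := by
          rcases fin3_cases h0' with h | h
          · exact h
          · exact absurd ⟨k, hk, h⟩ h2'
        rw [e1, e2]
  intro j hj
  rcases Nat.even_or_odd j with ⟨k, hk⟩ | ⟨k, hk⟩
  · have : j = 2*k := by omega
    exact this ▸ heven k (by omega)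
  · have hj1 : j = (2*k)+1 := by omega
    have hj2 : (2*k)+2 = 2*(k+1) := by omega
    rw [hj1, odd_reconstruct c i (2*k), odd_reconstruct c' i' (2*k), hj2,
      heven k (by omega), heven (k+1) (by omega)]

/-- traces are determined by the top row and the code of the rightmost column -/
lemma trace_ext {c c' : ℕ → Fin 3} (m K : ℕ)
    (htop : ∀ i ≤ m, c i = c' i)
    (hv : ∀ k ≤ K, (Fex^[2*k] c m = 0 ↔ Fex^[2*k] c' m = 0))
    (hb : (∃ k ≤ K, Fex^[2*k] c m = 2) ↔ (∃ k ≤ K, Fex^[2*k] c' m = 2)) :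
    ∀ k ≤ 2*K, ∀ i ≤ m, Fex^[k] c i = Fex^[k] c' i := by
  have hcol := column_ext K hv hb
  intro k
  induction k with
  | zero => intro _ i hi; exact htop i hi
  | succ k IHk =>
    intro hk i hi
    rcases Nat.lt_or_ge i m with hlt | hge
    · rw [fex_iter, fex_iter, IHk (by omega) i (by omega), IHk (by omega) (i+1) (by omega)]
    · have : i = m := le_antisymm hi hge
      rw [this]
      exact hcol (k+1) hk


open Dynamics Set Uniformity UniformSpace
open scoped ENNReal NNReal
open scoped SetRel

/-- basic entourages for the product uniformity -/
def Vent (m : ℕ) : Set ((ℕ → Fin 3) × (ℕ → Fin 3)) := {p | ∀ i ≤ m, p.1 i = p.2 i}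

lemma Vent_symm (m : ℕ) : SetRel.IsSymm (Vent m) := by
  rw [← SetRel.inv_eq_self_iff]
  ext p; exact ⟨fun h i hi => (h i hi).symm, fun h i hi => (h i hi).symm⟩

lemma Vent_comp (m : ℕ) : Vent m ○ Vent m ⊆ Vent m := by
  rintro ⟨x, z⟩ ⟨y, hxy, hyz⟩ i hi
  exact (hxy i hi).trans (hyz i hi)

lemma Vent_mem (m : ℕ) : Vent m ∈ 𝓤 (ℕ → Fin 3) := by
  rw [Pi.uniformity]
  have : Vent m = ⋂ i ∈ Finset.range (m+1), {p : (ℕ → Fin 3) × (ℕ → Fin 3) | p.1 i = p.2 i} := by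
    ext p
    simp only [Vent, mem_setOf_eq, mem_iInter, Finset.mem_range]
    exact ⟨fun h i hi => h i (by omega), fun h i hi => h i (by omega)⟩
  rw [this]
  apply (Filter.biInter_finset_mem _).mpr
  intro i _
  apply Filter.mem_iInf_of_mem i
  apply Filter.mem_comap.mpr
  refine ⟨SetRel.id, by rw [bot_uniformity]; exact Filter.mem_principal_self _, fun p hp => ?_⟩
  simpa [SetRel.id] using hp

lemma Vent_basis {W : Set ((ℕ → Fin 3) × (ℕ → Fin 3))} (hW : W ∈ 𝓤 (ℕ → Fin 3)) :
    ∃ m, Vent m ⊆ W := by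
  rw [Pi.uniformity] at hW
  rw [Filter.mem_iInf] at hW
  obtain ⟨I, hI, V, hV, hWV⟩ := hW
  obtain ⟨m, hm⟩ := hI.bddAbove
  refine ⟨m, ?_⟩
  rw [hWV]
  intro p hp
  rw [mem_iInter]
  rintro ⟨i, hi⟩
  have h2 := hV ⟨i, hi⟩
  rw [bot_uniformity] at h2
  rw [Filter.mem_comap] at h2
  obtain ⟨S, hS, hSV⟩ := h2
  apply hSV
  have : p.1 i = p.2 i := hp i (hm hi)
  simp only [mem_preimage, this]
  exact Filter.mem_principal.mp hS (by simp [SetRel.id])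

/-- finite code for (m,n)-traces -/
def code (m K : ℕ) (c : ℕ → Fin 3) : (Fin (m+1) → Fin 3) × (Fin (K+1) → Bool) × Bool :=
  ⟨fun i => c i, fun k => decide (Fex^[2*(k:ℕ)] c m = 0),
    decide (∃ k : Fin (K+1), Fex^[2*(k:ℕ)] c m = 2)⟩

lemma code_eq_trace {m K : ℕ} {c c' : ℕ → Fin 3} (h : code m K c = code m K c') :
    ∀ k ≤ 2*K, ∀ i ≤ m, Fex^[k] c i = Fex^[k] c' i := by
  obtain ⟨h1, h2, h3⟩ : (code m K c).1 = (code m K c').1 ∧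
      (code m K c).2.1 = (code m K c').2.1 ∧ (code m K c).2.2 = (code m K c').2.2 := by
    rw [h]; exact ⟨rfl, rfl, rfl⟩
  apply trace_ext m K
  · intro i hi
    exact congrFun h1 ⟨i, by omega⟩
  · intro k hk
    have := congrFun h2 ⟨k, by omega⟩
    simp only [code] at this
    constructor
    · intro hh
      exact of_decide_eq_true (this ▸ decide_eq_true hh)
    · intro hh
      exact of_decide_eq_true (this.symm ▸ decide_eq_true hh)
  · have h3' := h3
    simp only [code, decide_eq_decide] at h3'
    constructor
    · rintro ⟨k, hk, hk2⟩
      obtain ⟨k', hk2'⟩ := h3'.mp ⟨⟨k, by omega⟩, hk2⟩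
      exact ⟨k', by omega, hk2'⟩
    · rintro ⟨k, hk, hk2⟩
      obtain ⟨k', hk2'⟩ := h3'.mpr ⟨⟨k, by omega⟩, hk2⟩
      exact ⟨k', by omega, hk2'⟩

lemma coverMincard_le (m K n : ℕ) (hn : n ≤ 2*K + 1) :
    coverMincard Fex Set.univ (Vent m) n ≤ ((3^(m+1) * 2^(K+2) : ℕ) : ℕ∞) := by
  classical
  set θ := code m K with hθ
  set s : Finset (ℕ → Fin 3) := Finset.image (Function.invFun θ) Finset.univ with hs
  have hcov : IsDynCoverOf Fex Set.univ (Vent m) n s := by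
    intro c _
    have hx : θ (Function.invFun θ (θ c)) = θ c := Function.invFun_eq ⟨c, rfl⟩
    refine ⟨Function.invFun θ (θ c), ?_, ?_⟩
    · exact Finset.mem_coe.mpr (Finset.mem_image.mpr ⟨θ c, Finset.mem_univ _, rfl⟩)
    · show (c, Function.invFun θ (θ c)) ∈ dynEntourage Fex (Vent m) n
      rw [mem_dynEntourage]
      intro k hk
      intro i hi
      exact (code_eq_trace hx k (by omega) i hi).symm
  refine hcov.coverMincard_le_card.trans ?_
  rw [Nat.cast_le]
  calc s.card ≤ (Finset.univ : Finset ((Fin (m+1) → Fin 3) × (Fin (K+1) → Bool) × Bool)).card :=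
        Finset.card_image_le
    _ = 3^(m+1) * 2^(K+2) := by
        simp [Finset.card_univ, Fintype.card_prod, Fintype.card_fun]
        ring

lemma Vent_comp_eq (m : ℕ) : Vent m ○ Vent m = Vent m := by
  apply Subset.antisymm (Vent_comp m)
  intro p hp
  exact ⟨p.1, fun i _ => rfl, hp⟩

lemma log_natCast (a : ℕ) (h : 0 < a) : ENNReal.log ((a : ℕ) : ℝ≥0∞) = ((Real.log a : ℝ) : EReal) := by
  rw [show ((a : ℕ) : ℝ≥0∞) = ENNReal.ofReal (a : ℝ) by simp [ENNReal.ofReal_natCast]]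
  rw [ENNReal.log_ofReal_of_pos (by exact_mod_cast h)]

open Filter in
lemma CE_upper (m : ℕ) :
    coverEntropyEntourage Fex Set.univ (Vent m) ≤ ((Real.log 2 / 2 : ℝ) : EReal) := by
  set L := Real.log 2 with hL
  set A := ((m:ℝ)+1) * Real.log 3 with hA
  have key : ∀ j : ℕ, 1 ≤ j → coverEntropyEntourage Fex Set.univ (Vent m) ≤
      (((A + 2*L) * (1/(2*(j:ℝ))) + L/2 : ℝ) : EReal) := by
    intro j hj
    have h1 : coverEntropyEntourage Fex Set.univ (Vent m) ≤
        ENNReal.log (coverMincard Fex Set.univ (Vent m) (2*j)) / (2*j : ℕ) := by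
      haveI := Vent_symm m
      have := coverEntropyEntourage_le_log_coverMincard_div (T := Fex) (F := Set.univ)
        (Set.mapsTo_univ Fex Set.univ) (U := Vent m) (n := 2*j) (by omega)
      rwa [Vent_comp_eq m] at this
    have h2 : ENNReal.log (coverMincard Fex Set.univ (Vent m) (2*j)) ≤
        ENNReal.log (((3^(m+1) * 2^(j+2) : ℕ) : ℝ≥0∞)) := by
      apply ENNReal.log_monotone
      have := coverMincard_le m j (2*j) (by omega)
      exact_mod_cast ENat.toENNReal_mono this
    have h3 : ENNReal.log (((3^(m+1) * 2^(j+2) : ℕ) : ℝ≥0∞)) =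
        ((A + ((j:ℝ)+2)*L : ℝ) : EReal) := by
      rw [log_natCast _ (by positivity)]
      congr 1
      rw [Nat.cast_mul, Nat.cast_pow, Nat.cast_pow, Real.log_mul (by positivity) (by positivity),
        Real.log_pow, Real.log_pow]
      push_cast [hA, hL]
      ring
    have h4 : (((A + ((j:ℝ)+2)*L : ℝ) : EReal)) / ((2*j : ℕ) : EReal) =
        (((A + ((j:ℝ)+2)*L) / (2*(j:ℝ)) : ℝ) : EReal) := by
      rw [EReal.coe_div]
      norm_cast
    have h5 : (A + ((j:ℝ)+2)*L) / (2*(j:ℝ)) = (A + 2*L) * (1/(2*(j:ℝ))) + L/2 := by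
      have hj' : (j:ℝ) ≠ 0 := Nat.cast_ne_zero.mpr (by omega)
      field_simp
      ring
    calc coverEntropyEntourage Fex Set.univ (Vent m)
        ≤ ENNReal.log (coverMincard Fex Set.univ (Vent m) (2*j)) / ((2*j : ℕ) : EReal) := h1
      _ ≤ ENNReal.log (((3^(m+1) * 2^(j+2) : ℕ) : ℝ≥0∞)) / ((2*j : ℕ) : EReal) := by
          exact EReal.div_le_div_right_of_nonneg (by exact_mod_cast Nat.zero_le _) h2
      _ = _ := by rw [h3, h4, h5]
  -- pass to the limit
  have htend : Tendsto (fun j : ℕ => (((A + 2*L) * (1/(2*(j:ℝ))) + L/2 : ℝ) : EReal))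
      atTop (nhds ((L/2 : ℝ) : EReal)) := by
    rw [EReal.tendsto_coe]
    have h0 : Tendsto (fun j : ℕ => (A + 2*L) * (1/(2*(j:ℝ)))) atTop (nhds 0) := by
      have : Tendsto (fun j : ℕ => (2*(j:ℝ))) atTop atTop :=
        (tendsto_natCast_atTop_atTop).const_mul_atTop (by norm_num)
      simpa using (this.inv_tendsto_atTop).const_mul (A + 2*L)
    simpa using h0.add (tendsto_const_nhds (x := L/2))
  have := Filter.le_liminf_of_le (by isBoundedDefault)
    (Filter.eventually_atTop.mpr ⟨1, fun j hj => key j hj⟩)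
  rw [htend.liminf_eq] at this
  exact this

/-! ### Lower bound construction -/

def tmplA (u : ℕ → Bool) : ℕ → Fin 3 := fun k => if u (k/2) then (if k % 2 = 0 then 1 else 2) else 0
def tmplB (t : ℕ → Bool) : ℕ → Fin 3 := fun k => match k with | 0 => 2 | (k+1) => tmplA t k
def dA (u : ℕ → Bool) : ℕ → Bool := fun l => xor (u l) (u (l+1))
def dB (t : ℕ → Bool) : ℕ → Bool := fun l => match l with | 0 => !(t 0) | (l+1) => xor (t l) (t (l+1))
def bitsF (s : ℕ → Bool) : ℕ → (ℕ → Bool) :=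
  fun i => Nat.rec s (fun i prev => if i % 2 = 0 then dA prev else dB prev) i
def XF (s : ℕ → Bool) (i : ℕ) : ℕ → Fin 3 :=
  if i % 2 = 0 then tmplA (bitsF s i) else tmplB (bitsF s i)
def confF (s : ℕ → Bool) : ℕ → Fin 3 := fun i => XF s i 0

lemma tmplB_succ (t : ℕ → Bool) (k : ℕ) : tmplB t (k+1) = tmplA t k := rfl

lemma tmplA_even (u : ℕ → Bool) (l : ℕ) : tmplA u (2*l) = if u l then 1 else 0 := by
  have e1 : (2*l)/2 = l := by omega
  have e2 : (2*l) % 2 = 0 := by omega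
  simp [tmplA, e1, e2]

lemma tmplA_odd (u : ℕ → Bool) (l : ℕ) : tmplA u (2*l+1) = if u l then 2 else 0 := by
  have e1 : (2*l+1)/2 = l := by omega
  have e2 : (2*l+1) % 2 = 1 := by omega
  simp [tmplA, e1, e2]

lemma consA (u : ℕ → Bool) (k : ℕ) : tmplA u (k+1) = rho (tmplB (dA u) k) (tmplA u k) := by
  rcases Nat.even_or_odd k with ⟨l, hl⟩ | ⟨l, hl⟩
  · have hk : k = 2*l := by omega
    subst hk
    have hb : tmplB (dA u) (2*l) = 0 ∨ tmplB (dA u) (2*l) = 2 := by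
      match l with
      | 0 => exact Or.inr rfl
      | (p+1) =>
        have h1 : 2*(p+1) = (2*p+1)+1 := by omega
        rw [h1, tmplB_succ, tmplA_odd]
        cases dA u p <;> simp
    rw [show (2*l)+1 = 2*l+1 from rfl, tmplA_odd, tmplA_even]
    cases h : u l
    · simp only [if_neg Bool.false_ne_true]
      rcases hb with hb | hb <;> rw [hb] <;> rfl
    · simp only [if_pos rfl]
      exact (rho_one _).symm
  · have hk : k = 2*l+1 := by omega
    subst hk
    rw [show (2*l+1)+1 = 2*(l+1) from by omega, tmplA_even, tmplA_odd, tmplB_succ, tmplA_even]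
    rw [show dA u l = xor (u l) (u (l+1)) from rfl]
    cases h1 : u l <;> cases h2 : u (l+1) <;> simp <;> rfl

lemma consB (t : ℕ → Bool) (k : ℕ) : tmplB t (k+1) = rho (tmplA (dB t) k) (tmplB t k) := by
  match k with
  | 0 =>
    rw [tmplB_succ, show tmplA t 0 = if t 0 then 1 else 0 from tmplA_even t 0,
      show tmplA (dB t) 0 = if dB t 0 then 1 else 0 from tmplA_even (dB t) 0,
      show dB t 0 = !(t 0) from rfl]
    cases h : t 0 <;> rfl
  | (l+1) =>
    rw [tmplB_succ, tmplB_succ]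
    rcases Nat.even_or_odd l with ⟨p, hp⟩ | ⟨p, hp⟩
    · have hl : l = 2*p := by omega
      subst hl
      rw [show (2*p)+1 = 2*p+1 from rfl, tmplA_odd, tmplA_odd, tmplA_even]
      cases h : t p
      · simp only [if_neg Bool.false_ne_true]
        cases hd : dB t p <;> simp <;> rfl
      · simp only [if_pos rfl]
        exact (rho_one _).symm
    · have hl : l = 2*p+1 := by omega
      subst hl
      rw [show (2*p+1)+1 = 2*(p+1) from by omega, tmplA_even, tmplA_even, tmplA_odd]
      rw [show dB t (p+1) = xor (t p) (t (p+1)) from rfl]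
      cases h1 : t p <;> cases h2 : t (p+1) <;> simp <;> rfl

lemma bitsF_succ (s : ℕ → Bool) (i : ℕ) :
    bitsF s (i+1) = if i % 2 = 0 then dA (bitsF s i) else dB (bitsF s i) := rfl

lemma consX (s : ℕ → Bool) (i k : ℕ) : XF s i (k+1) = rho (XF s (i+1) k) (XF s i k) := by
  rcases Nat.even_or_odd i with ⟨r, hr⟩ | ⟨r, hr⟩
  · have h0 : i % 2 = 0 := by omega
    have h1 : (i+1) % 2 = 1 := by omega
    simp only [XF, h0, h1, if_pos rfl, reduceIte, bitsF_succ]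
    exact consA (bitsF s i) k
  · have h0 : i % 2 = 1 := by omega
    have h1 : (i+1) % 2 = 0 := by omega
    simp only [XF, h0, h1, reduceIte, bitsF_succ]
    exact consB (bitsF s i) k

lemma field_eq (s : ℕ → Bool) : ∀ k i, Fex^[k] (confF s) i = XF s i k := by
  intro k
  induction k with
  | zero => intro i; rfl
  | succ k IH => intro i; rw [fex_iter, IH, IH, consX]

lemma column_confF (s : ℕ → Bool) (j : ℕ) :
    Fex^[2*j] (confF s) 0 = if s j then 1 else 0 := by
  rw [field_eq s (2*j) 0]
  show tmplA (bitsF s 0) (2*j) = _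
  rw [show bitsF s 0 = s from rfl, tmplA_even]

lemma coverMincard_ge (n : ℕ) (hn : 1 ≤ n) :
    ((2^((n+1)/2) : ℕ) : ℕ∞) ≤ coverMincard Fex Set.univ (Vent 0) n := by
  classical
  set M := (n+1)/2 with hM
  apply le_iInf₂
  intro t ht
  -- extend a finite word to an infinite bit sequence
  set ext : (Fin M → Bool) → (ℕ → Bool) := fun w j => if h : j < M then w ⟨j, h⟩ else false with hext
  have hmem : ∀ w : Fin M → Bool, ∃ x ∈ t, confF (ext w) ∈ ball x (dynEntourage Fex (Vent 0) n) := by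
    intro w
    have := ht (mem_univ (confF (ext w)))
    haveI hV0 := Vent_symm 0
    obtain ⟨y, hy, h⟩ := this
    exact ⟨y, hy, mem_ball_symmetry.mpr h⟩
  choose φ hφt hφball using hmem
  have hinj : Function.Injective φ := by
    intro w w' hww
    funext j
    by_contra hj
    have hcol : ∀ (w : Fin M → Bool) (k : ℕ), k < n →
        Fex^[k] (confF (ext w)) 0 = Fex^[k] (φ w) 0 := by
      intro w k hk
      have := hφball w
      haveI hV0 := Vent_symm 0
      rw [mem_ball_symmetry] at this
      have h2 := mem_dynEntourage.mp this k hk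
      exact h2 0 (le_refl 0)
    have h2j : 2*(j:ℕ) < n := by
      have := j.2
      omega
    have e1 := hcol w (2*(j:ℕ)) h2j
    have e2 := hcol w' (2*(j:ℕ)) h2j
    rw [column_confF, show ext w j = w j from by simp [hext]] at e1
    rw [column_confF, show ext w' j = w' j from by simp [hext]] at e2
    rw [hww] at e1
    rw [← e2] at e1
    cases h1 : w j <;> cases h2 : w' j <;> rw [h1, h2] at e1 <;> simp_all
  have hcard : 2^M ≤ t.card := by
    have := Fintype.card_le_of_injective (fun w => (⟨φ w, hφt w⟩ : {x // x ∈ t}))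
      (fun w w' h => hinj (Subtype.mk_eq_mk.mp h))
    simpa [Fintype.card_coe] using this
  exact_mod_cast hcard

open Filter in
lemma CE_lower : ((Real.log 2 / 2 : ℝ) : EReal) ≤ coverEntropyEntourage Fex Set.univ (Vent 0) := by
  set L := Real.log 2 with hL
  apply Filter.le_limsup_of_le (by isBoundedDefault)
  intro b hb
  rw [Filter.eventually_atTop] at hb
  obtain ⟨N, hN⟩ := hb
  -- use n = max N 1
  set n := max N 1 with hn
  refine le_trans ?_ (hN n (le_max_left N 1))
  have hn1 : 1 ≤ n := le_max_right N 1
  set M := (n+1)/2 with hM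
  have h1 : ENNReal.log ((2^M : ℕ) : ℝ≥0∞) ≤
      ENNReal.log (coverMincard Fex Set.univ (Vent 0) n) := by
    apply ENNReal.log_monotone
    exact_mod_cast ENat.toENNReal_mono (coverMincard_ge n hn1)
  have h2 : ENNReal.log ((2^M : ℕ) : ℝ≥0∞) = (((M:ℝ) * L : ℝ) : EReal) := by
    rw [log_natCast _ (by positivity)]
    congr 1
    rw [Nat.cast_pow, Real.log_pow]
    norm_num [hL]
  have h3 : (((M:ℝ) * L : ℝ) : EReal) / ((n : ℕ) : EReal) = (((M:ℝ) * L / (n:ℝ) : ℝ) : EReal) := by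
    rw [EReal.coe_div]; norm_cast
  have h4 : L / 2 ≤ (M:ℝ) * L / (n:ℝ) := by
    have hn0 : (0:ℝ) < (n:ℝ) := by exact_mod_cast hn1
    rw [div_le_div_iff₀ (by norm_num) hn0]
    have hMn : (n:ℝ) ≤ 2*(M:ℝ) := by exact_mod_cast (by omega : n ≤ 2*M)
    nlinarith [Real.log_nonneg (by norm_num : (1:ℝ) ≤ 2)]
  calc ((L/2 : ℝ) : EReal) ≤ (((M:ℝ) * L / (n:ℝ) : ℝ) : EReal) := by exact_mod_cast h4
    _ = ENNReal.log ((2^M : ℕ) : ℝ≥0∞) / ((n : ℕ) : EReal) := by rw [h2, h3]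
    _ ≤ ENNReal.log (coverMincard Fex Set.univ (Vent 0) n) / ((n : ℕ) : EReal) :=
        EReal.div_le_div_right_of_nonneg (by exact_mod_cast Nat.zero_le _) h1

/-- The topological entropy of the example CA `F` is `1/2` in base-2 logarithm, i.e.
`(log 2)/2` in natural-logarithm units. -/
theorem entropy_of_example_CA :
    Dynamics.coverEntropy Fex Set.univ = ((Real.log 2 / 2 : ℝ) : EReal) := by
  apply le_antisymm
  · unfold Dynamics.coverEntropy
    apply iSup₂_le
    intro W hW
    obtain ⟨m, hsub⟩ := Vent_basis hW
    exact (coverEntropyEntourage_antitone Fex Set.univ hsub).trans (CE_upper m)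
  · exact CE_lower.trans (coverEntropyEntourage_le_coverEntropy Fex Set.univ (Vent_mem 0))
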